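/- Fix integers N ≥ 1 and Λ ≥ 2. Consider the dyadic rectangles R_m = [0, 2^m) × [j₀, j₀ + 2^{-m}) for m = 0, …, M−1, with j₀ = Λ−2, and the measure μ = δ_{(0,j₀)} + ∑_{m=0}^{M-1} (1+j₀)^{-1} δ_{x_m}, where x_m is a point in E(R_m) = [2^{m-1}, 2^m) × [j₀ + 2^{-m-1}, j₀ + 2^{-m}). Then every nonempty subcollection F of {R_0, …, R_{M−1}} with #F = k satisfies (∑_{R∈F} μ(R))/μ(sh(F)) = k(2+j₀)/(1+j₀+k). In particular ‖{R_0,…,R_{M−1}}‖_{Carleson(μ)} ≤ Λ, yet for M large enough, any partition into N subcollections has one piece with Carleson constant at least Λ/2. -/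
import Mathlib


open MeasureTheory Set
open scoped ENNReal

private lemma stmt16_memRiff (j₀ : ℝ) (p q : ℕ) (z : ℝ × ℝ)
    (hz : z ∈ Set.Ico ((2:ℝ)^p / 2) (2^p) ×ˢ
      Set.Ico (j₀ + (2:ℝ)^(-(p:ℤ)-1)) (j₀ + (2:ℝ)^(-(p:ℤ)))) :
    z ∈ Set.Ico (0:ℝ) (2^q) ×ˢ Set.Ico j₀ (j₀ + (2:ℝ)^(-(q:ℤ))) ↔ p = q := by
  obtain ⟨⟨h1, h2⟩, h3, h4⟩ := hz
  constructor
  · rintro ⟨⟨g1, g2⟩, g3, g4⟩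
    have hpq : (2:ℝ)^p / 2 < 2^q := lt_of_le_of_lt h1 g2
    have hple : p ≤ q := by
      by_contra h
      push_neg at h
      have : (2:ℝ)^q ≤ 2^p / 2 := by
        rw [le_div_iff₀ (by norm_num : (0:ℝ) < 2), ← pow_succ]
        exact pow_le_pow_right₀ (by norm_num) (by omega)
      linarith
    have hqle : q ≤ p := by
      by_contra h
      push_neg at h
      have : (2:ℝ)^(-(p:ℤ)-1) < 2^(-(q:ℤ)) := by linarith
      have : -(p:ℤ)-1 < -(q:ℤ) :=
        (zpow_lt_zpow_iff_right₀ (by norm_num : (1:ℝ) < 2)).mp this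
      omega
    omega
  · rintro rfl
    exact ⟨⟨le_trans (by positivity) h1, h2⟩,
      le_trans (by linarith [zpow_pos (by norm_num : (0:ℝ)<2) (-(p:ℤ)-1)]) h3, h4⟩

private lemma stmt16_apply (c : ℝ≥0∞) (M : ℕ) (x : ℕ → ℝ×ℝ) (a : ℝ×ℝ) (s : Set (ℝ×ℝ)) :
    (Measure.dirac a + ∑ m ∈ Finset.range M, c • Measure.dirac (x m)) s
    = s.indicator 1 a + ∑ m ∈ Finset.range M, c * s.indicator 1 (x m) := by
  simp [Measure.add_apply, Measure.finset_sum_apply, Measure.smul_apply,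
    Measure.dirac_apply, smul_eq_mul]

private lemma stmt16_ofReal_form (n k : ℕ) (hn : 1 ≤ n) :
    (k:ℝ≥0∞) * (1 + ((n:ℝ≥0∞))⁻¹) = ENNReal.ofReal ((k:ℝ) * (1 + (n:ℝ)⁻¹)) ∧
    1 + (k:ℝ≥0∞) * ((n:ℝ≥0∞))⁻¹ = ENNReal.ofReal (1 + (k:ℝ) * (n:ℝ)⁻¹) := by
  have hn' : (0:ℝ) < n := by exact_mod_cast hn
  have hinv : ((n:ℝ≥0∞))⁻¹ = ENNReal.ofReal ((n:ℝ)⁻¹) := by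
    rw [ENNReal.ofReal_inv_of_pos hn', ENNReal.ofReal_natCast]
  constructor
  · rw [ENNReal.ofReal_mul (by positivity), ENNReal.ofReal_add (by norm_num) (by positivity),
      ENNReal.ofReal_one, ENNReal.ofReal_natCast, hinv]
  · rw [ENNReal.ofReal_add (by norm_num) (by positivity), ENNReal.ofReal_mul (by positivity),
      ENNReal.ofReal_one, ENNReal.ofReal_natCast, hinv]

private lemma stmt16_aux_eq (n k : ℕ) (hn : 1 ≤ n) :
    (k:ℝ≥0∞) * (1 + ((n:ℝ≥0∞))⁻¹) =
      ENNReal.ofReal (((k:ℝ) * ((n:ℝ)+1)) / ((n:ℝ) + (k:ℝ))) *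
        (1 + (k:ℝ≥0∞) * ((n:ℝ≥0∞))⁻¹) := by
  obtain ⟨e1, e2⟩ := stmt16_ofReal_form n k hn
  have hn' : (0:ℝ) < n := by exact_mod_cast hn
  rw [e1, e2, ← ENNReal.ofReal_mul (by positivity)]
  congr 1
  field_simp

private lemma stmt16_aux_le (n k : ℕ) (hn : 1 ≤ n) :
    (k:ℝ≥0∞) * (1 + ((n:ℝ≥0∞))⁻¹) ≤
      ((n:ℝ≥0∞)+1) * (1 + (k:ℝ≥0∞) * ((n:ℝ≥0∞))⁻¹) := by
  obtain ⟨e1, e2⟩ := stmt16_ofReal_form n k hn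
  have hn' : (0:ℝ) < n := by exact_mod_cast hn
  have e3 : ((n:ℝ≥0∞)+1) = ENNReal.ofReal ((n:ℝ)+1) := by
    rw [ENNReal.ofReal_add (by positivity) (by norm_num), ENNReal.ofReal_one,
      ENNReal.ofReal_natCast]
  rw [e1, e2, e3, ← ENNReal.ofReal_mul (by positivity)]
  apply ENNReal.ofReal_le_ofReal
  have h1 : (0:ℝ) ≤ (n:ℝ)⁻¹ := by positivity
  have h2 : (n:ℝ) * (n:ℝ)⁻¹ = 1 := by field_simp
  nlinarith [Nat.cast_nonneg (α := ℝ) k, Nat.cast_nonneg (α := ℝ) n]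

private lemma stmt16_aux_le2 (n k : ℕ) (hn : 1 ≤ n) (hk : n ≤ k) :
    ((n:ℝ≥0∞)+1) / 2 * (1 + (k:ℝ≥0∞) * ((n:ℝ≥0∞))⁻¹) ≤
      (k:ℝ≥0∞) * (1 + ((n:ℝ≥0∞))⁻¹) := by
  obtain ⟨e1, e2⟩ := stmt16_ofReal_form n k hn
  have hn' : (0:ℝ) < n := by exact_mod_cast hn
  have hk' : (n:ℝ) ≤ k := by exact_mod_cast hk
  have e3 : ((n:ℝ≥0∞)+1)/2 = ENNReal.ofReal (((n:ℝ)+1)/2) := by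
    rw [ENNReal.ofReal_div_of_pos (by norm_num), ENNReal.ofReal_add (by positivity) (by norm_num),
      ENNReal.ofReal_one, ENNReal.ofReal_natCast]
    norm_num
  rw [e1, e2, e3, ← ENNReal.ofReal_mul (by positivity)]
  apply ENNReal.ofReal_le_ofReal
  have h2 : (n:ℝ) * (n:ℝ)⁻¹ = 1 := by field_simp
  have ht : (0:ℝ) ≤ (n:ℝ)⁻¹ := by positivity
  have h3 : (1:ℝ) ≤ (k:ℝ) * (n:ℝ)⁻¹ := by
    rw [← h2]; exact mul_le_mul_of_nonneg_right hk' ht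
  nlinarith [mul_le_mul_of_nonneg_right hk' ht, Nat.cast_nonneg (α := ℝ) k]

theorem stmt16 (N : ℕ) (hN : 1 ≤ N) (Λ : ℕ) (hΛ : 2 ≤ Λ) :
    let j₀ : ℝ := (Λ : ℝ) - 2
    let R : ℕ → Set (ℝ × ℝ) := fun m =>
      Set.Ico (0 : ℝ) (2 ^ m) ×ˢ Set.Ico j₀ (j₀ + (2 : ℝ) ^ (-(m : ℤ)))
    let Esel : ℕ → Set (ℝ × ℝ) := fun m =>
      Set.Ico ((2 : ℝ) ^ m / 2) (2 ^ m) ×ˢ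
        Set.Ico (j₀ + (2 : ℝ) ^ (-(m : ℤ) - 1)) (j₀ + (2 : ℝ) ^ (-(m : ℤ)))
    (∀ (M : ℕ) (x : ℕ → ℝ × ℝ), (∀ m < M, x m ∈ Esel m) →
      let μ : Measure (ℝ × ℝ) :=
        Measure.dirac (0, j₀) +
          ∑ m ∈ Finset.range M, ((Λ : ℝ≥0∞) - 1)⁻¹ • Measure.dirac (x m)
      (∀ F ⊆ Finset.range M, F.Nonempty →
        ∑ m ∈ F, μ (R m) =
          ENNReal.ofReal (((F.card : ℝ) * (2 + j₀)) / (1 + j₀ + (F.card : ℝ))) *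
            μ (⋃ m ∈ F, R m)) ∧
      (∀ F ⊆ Finset.range M,
        ∑ m ∈ F, μ (R m) ≤ (Λ : ℝ≥0∞) * μ (⋃ m ∈ F, R m))) ∧
    (∃ M₀ : ℕ, ∀ M ≥ M₀, ∀ x : ℕ → ℝ × ℝ, (∀ m < M, x m ∈ Esel m) →
      let μ : Measure (ℝ × ℝ) :=
        Measure.dirac (0, j₀) +
          ∑ m ∈ Finset.range M, ((Λ : ℝ≥0∞) - 1)⁻¹ • Measure.dirac (x m)
      ∀ f : ℕ → Fin N, ∃ i : Fin N, ∃ F ⊆ Finset.range M,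
        F.Nonempty ∧ (∀ m ∈ F, f m = i) ∧
        ((Λ : ℝ≥0∞) / 2) * μ (⋃ m ∈ F, R m) ≤ ∑ m ∈ F, μ (R m)) := by
  intro j₀ R Esel
  obtain ⟨n, rfl⟩ : ∃ n, Λ = n + 1 := ⟨Λ - 1, by omega⟩
  have hn1 : 1 ≤ n := by omega
  have hcast : (((n+1 : ℕ) : ℝ≥0∞) - 1) = (n:ℝ≥0∞) := by
    push_cast
    exact ENNReal.add_sub_cancel_right ENNReal.one_ne_top
  have hΛE : ((n+1 : ℕ) : ℝ≥0∞) = (n:ℝ≥0∞) + 1 := by push_cast; ring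
  have hj2 : (2:ℝ) + j₀ = (n:ℝ) + 1 := by simp only [j₀]; push_cast; ring
  have hj1 : (1:ℝ) + j₀ = (n:ℝ) := by simp only [j₀]; push_cast; ring
  have hR0 : ∀ m : ℕ, ((0:ℝ), j₀) ∈ R m := by
    intro m
    exact ⟨⟨le_refl 0, by positivity⟩, le_refl j₀,
      by linarith [zpow_pos (by norm_num : (0:ℝ)<2) (-(m:ℤ))]⟩
  -- key computation of the measure values
  have key : ∀ (M : ℕ) (x : ℕ → ℝ × ℝ), (∀ m < M, x m ∈ Esel m) →
      ∀ F ⊆ Finset.range M,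
      (∑ m ∈ F, (Measure.dirac ((0:ℝ), j₀) +
          ∑ m ∈ Finset.range M, (((n+1 : ℕ) : ℝ≥0∞) - 1)⁻¹ • Measure.dirac (x m)) (R m)
        = (F.card : ℝ≥0∞) * (1 + ((n:ℝ≥0∞))⁻¹)) ∧
      (F.Nonempty → (Measure.dirac ((0:ℝ), j₀) +
          ∑ m ∈ Finset.range M, (((n+1 : ℕ) : ℝ≥0∞) - 1)⁻¹ • Measure.dirac (x m)) (⋃ m ∈ F, R m)
        = 1 + (F.card : ℝ≥0∞) * ((n:ℝ≥0∞))⁻¹) := by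
    intro M x hx F hF
    constructor
    · have hterm : ∀ m ∈ F, (Measure.dirac ((0:ℝ), j₀) +
          ∑ m ∈ Finset.range M, (((n+1 : ℕ) : ℝ≥0∞) - 1)⁻¹ • Measure.dirac (x m)) (R m)
          = 1 + ((n:ℝ≥0∞))⁻¹ := by
        intro m hm
        have hmM : m ∈ Finset.range M := hF hm
        rw [stmt16_apply, Set.indicator_of_mem (hR0 m)]
        congr 1
        have hpt : ∀ p ∈ Finset.range M,
            (((n+1 : ℕ) : ℝ≥0∞) - 1)⁻¹ * (R m).indicator 1 (x p)
            = if p = m then (((n:ℝ≥0∞))⁻¹) else 0 := by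
          intro p hp
          have hmem := stmt16_memRiff j₀ p m (x p) (hx p (Finset.mem_range.mp hp))
          by_cases h : p = m
          · rw [if_pos h, Set.indicator_of_mem (hmem.mpr h), hcast]
            simp
          · rw [if_neg h, Set.indicator_of_notMem (fun hc => h (hmem.mp hc)), mul_zero]
        rw [Finset.sum_congr rfl hpt, Finset.sum_ite_eq' (Finset.range M) m
          (fun _ => ((n:ℝ≥0∞))⁻¹), if_pos hmM]
      rw [Finset.sum_congr rfl hterm, Finset.sum_const, nsmul_eq_mul]
    · intro hFne
      obtain ⟨m₀, hm₀⟩ := hFne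
      have hU0 : ((0:ℝ), j₀) ∈ ⋃ m ∈ F, R m :=
        Set.mem_iUnion₂.mpr ⟨m₀, hm₀, hR0 m₀⟩
      rw [stmt16_apply, Set.indicator_of_mem hU0]
      congr 1
      have hpt : ∀ p ∈ Finset.range M,
          (((n+1 : ℕ) : ℝ≥0∞) - 1)⁻¹ * (⋃ m ∈ F, R m).indicator 1 (x p)
          = if p ∈ F then (((n:ℝ≥0∞))⁻¹) else 0 := by
        intro p hp
        have hpE := hx p (Finset.mem_range.mp hp)
        by_cases h : p ∈ F
        · have hmem : x p ∈ ⋃ m ∈ F, R m :=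
            Set.mem_iUnion₂.mpr ⟨p, h, (stmt16_memRiff j₀ p p (x p) hpE).mpr rfl⟩
          rw [if_pos h, Set.indicator_of_mem hmem, hcast]
          simp
        · rw [if_neg h, Set.indicator_of_notMem, mul_zero]
          intro hc
          obtain ⟨m, hmF, hmR⟩ := Set.mem_iUnion₂.mp hc
          exact h (((stmt16_memRiff j₀ p m (x p) hpE).mp hmR) ▸ hmF)
      rw [Finset.sum_congr rfl hpt, Finset.sum_ite_mem,
        Finset.inter_eq_right.mpr hF, Finset.sum_const, nsmul_eq_mul]
  constructor
  · intro M x hx μ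
    constructor
    · intro F hF hFne
      obtain ⟨hsum, hunion⟩ := key M x hx F hF
      have hsum' : ∑ m ∈ F, μ (R m) = (F.card : ℝ≥0∞) * (1 + ((n:ℝ≥0∞))⁻¹) := hsum
      have hunion' : μ (⋃ m ∈ F, R m) = 1 + (F.card : ℝ≥0∞) * ((n:ℝ≥0∞))⁻¹ := hunion hFne
      rw [hsum', hunion', hj2, hj1]
      exact stmt16_aux_eq n F.card hn1
    · intro F hF
      obtain ⟨hsum, hunion⟩ := key M x hx F hF
      rcases F.eq_empty_or_nonempty with rfl | hFne
      · simp
      have hsum' : ∑ m ∈ F, μ (R m) = (F.card : ℝ≥0∞) * (1 + ((n:ℝ≥0∞))⁻¹) := hsum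
      have hunion' : μ (⋃ m ∈ F, R m) = 1 + (F.card : ℝ≥0∞) * ((n:ℝ≥0∞))⁻¹ := hunion hFne
      rw [hsum', hunion', hΛE]
      exact stmt16_aux_le n F.card hn1
  · refine ⟨N * (n + 1), ?_⟩
    intro M hM x hx μ f
    -- pigeonhole: some fiber has at least n+1 elements
    have hcard : (Finset.range M).card =
        ∑ i : Fin N, ((Finset.range M).filter (fun m => f m = i)).card :=
      Finset.card_eq_sum_card_fiberwise (fun x _ => Finset.mem_univ (f x))
    have hpig : ∃ i : Fin N, n ≤ ((Finset.range M).filter (fun m => f m = i)).card := by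
      by_contra h
      push_neg at h
      have hNe : Nonempty (Fin N) := ⟨⟨0, by omega⟩⟩
      have hlt : ∑ i : Fin N, ((Finset.range M).filter (fun m => f m = i)).card
          < ∑ _i : Fin N, n :=
        Finset.sum_lt_sum_of_nonempty Finset.univ_nonempty (fun i _ => h i)
      simp only [Finset.sum_const, Finset.card_univ, Fintype.card_fin, smul_eq_mul] at hlt
      rw [Finset.card_range] at hcard
      have h1 : M < N * n := hcard ▸ hlt
      have h2 : N * n ≤ N * (n + 1) := Nat.mul_le_mul_left _ (by omega)
      exact Nat.lt_irrefl M (lt_of_lt_of_le h1 (le_trans h2 hM))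
    obtain ⟨i, hi⟩ := hpig
    set F := (Finset.range M).filter (fun m => f m = i) with hFdef
    have hFsub : F ⊆ Finset.range M := Finset.filter_subset _ _
    have hFne : F.Nonempty := Finset.card_pos.mp (by omega)
    refine ⟨i, F, hFsub, hFne, fun m hm => (Finset.mem_filter.mp hm).2, ?_⟩
    obtain ⟨hsum, hunion⟩ := key M x hx F hFsub
    have hsum' : ∑ m ∈ F, μ (R m) = (F.card : ℝ≥0∞) * (1 + ((n:ℝ≥0∞))⁻¹) := hsum
    have hunion' : μ (⋃ m ∈ F, R m) = 1 + (F.card : ℝ≥0∞) * ((n:ℝ≥0∞))⁻¹ := hunion hFne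
    rw [hsum', hunion', hΛE]
    exact stmt16_aux_le2 n F.card hn1 hi
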